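/- Let q ≥ 2 and d ≥ 2 be integers and let l_1 = 0, l_2, …, l_{d−1} be elements of ℤ_q = ℤ/qℤ such that l_i − l_j is a unit of ℤ_q whenever i ≠ j. Then every element Q of the ring R_d(ℤ_q) can be written uniquely as Q = P_1 + P_2 + ⋯ + P_d, where for each 1 ≤ i ≤ d−1 the summand P_i lies in the ℤ_q-submodule of R_d(ℤ_q) spanned by {(t+l_i)^{−k} : k ≥ 1}, and P_d lies in the image of the polynomial ring ℤ_q[t] in R_d(ℤ_q). Equivalently, the additive group of R_d(ℤ_q) is the internal direct sum of the image of ℤ_q[t] and the d−1 subgroups spanned by the negative powers of the elements t+l_i. -/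

import Mathlib

open Polynomial

/-- The multiplicative set of `ℤ_q[t]` generated by the polynomials `t + l i`. -/
noncomputable def dlSub (q d : ℕ) (l : Fin (d-1) → ZMod q) : Submonoid (Polynomial (ZMod q)) :=
  Submonoid.closure {p | ∃ i : Fin (d-1), p = X + C (l i)}

/-- The ring `R_d(ℤ_q) = ℤ_q[t, (t+l_1)⁻¹, …, (t+l_{d-1})⁻¹]`, realized as the localization of
`ℤ_q[t]` at the multiplicative set generated by the `t + l i`. -/
abbrev Rd (q d : ℕ) (l : Fin (d-1) → ZMod q) := Localization (dlSub q d l)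

/-- The image of `t + l i` in `R_d(ℤ_q)`, as a unit. -/
noncomputable def tU (q d : ℕ) (l : Fin (d-1) → ZMod q) (i : Fin (d-1)) : (Rd q d l)ˣ :=
  (IsLocalization.map_units (M := dlSub q d l) (Rd q d l)
    ⟨X + C (l i), Submonoid.subset_closure ⟨i, rfl⟩⟩).unit

/-- The monomial `∏ i (t + l i) ^ (v i)`, as a unit of `R_d(ℤ_q)`. -/
noncomputable def monU (q d : ℕ) (l : Fin (d-1) → ZMod q) (v : Fin (d-1) → ℤ) : (Rd q d l)ˣ :=
  ∏ i, tU q d l i ^ (v i)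

namespace DecompAux
variable (q d : ℕ) (l : Fin (d-1) → ZMod q)

lemma tU_val (i : Fin (d-1)) :
    ((tU q d l i : (Rd q d l)ˣ) : Rd q d l)
      = algebraMap (Polynomial (ZMod q)) (Rd q d l) (X + C (l i)) :=
  IsUnit.unit_spec _

lemma smul_eq (c : ZMod q) (x : Rd q d l) :
    c • x = algebraMap (Polynomial (ZMod q)) (Rd q d l) (C c) * x := by
  rw [Algebra.smul_def, IsScalarTower.algebraMap_eq (ZMod q) (Polynomial (ZMod q)) (Rd q d l)]
  rfl

noncomputable def Mi (i : Fin (d-1)) : Submodule (ZMod q) (Rd q d l) :=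
  Submodule.span (ZMod q)
    {x : Rd q d l | ∃ k : ℕ, 1 ≤ k ∧ x = (((tU q d l i)⁻¹ : (Rd q d l)ˣ) : Rd q d l) ^ k}

noncomputable def Md : Submodule (ZMod q) (Rd q d l) :=
  (LinearMap.range (Algebra.linearMap (Polynomial (ZMod q)) (Rd q d l))).restrictScalars (ZMod q)

lemma mem_Md (x : Rd q d l) :
    x ∈ Md q d l ↔ ∃ p, algebraMap (Polynomial (ZMod q)) (Rd q d l) p = x := Iff.rfl

lemma inv_mem_Mi (i : Fin (d-1)) (k : ℕ) (hk : 1 ≤ k) :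
    (((tU q d l i)⁻¹ : (Rd q d l)ˣ) : Rd q d l) ^ k ∈ Mi q d l i :=
  Submodule.subset_span ⟨k, hk, rfl⟩

/-- E1 -/
lemma mul_inv_self_mem (i : Fin (d-1)) {x : Rd q d l} (hx : x ∈ Mi q d l i) :
    x * (((tU q d l i)⁻¹ : (Rd q d l)ˣ) : Rd q d l) ∈ Mi q d l i := by
  induction hx using Submodule.span_induction with
  | mem x h =>
    obtain ⟨k, hk, rfl⟩ := h
    rw [← pow_succ]
    exact inv_mem_Mi q d l i (k+1) (by omega)
  | zero => simpa using Submodule.zero_mem _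
  | add x y hx hy ihx ihy => rw [add_mul]; exact Submodule.add_mem _ ihx ihy
  | smul c x hx ih => rw [smul_mul_assoc]; exact Submodule.smul_mem _ _ ih

/-- key partial fraction identity -/
lemma pf_identity (i j : Fin (d-1)) :
    (l j - l i) • ((((tU q d l i)⁻¹ : (Rd q d l)ˣ) : Rd q d l)
        * (((tU q d l j)⁻¹ : (Rd q d l)ˣ) : Rd q d l))
      = (((tU q d l i)⁻¹ : (Rd q d l)ˣ) : Rd q d l)
        - (((tU q d l j)⁻¹ : (Rd q d l)ˣ) : Rd q d l) := by
  set a : Rd q d l := ((tU q d l i : (Rd q d l)ˣ) : Rd q d l)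
  set b : Rd q d l := ((tU q d l j : (Rd q d l)ˣ) : Rd q d l)
  set ia : Rd q d l := (((tU q d l i)⁻¹ : (Rd q d l)ˣ) : Rd q d l)
  set ib : Rd q d l := (((tU q d l j)⁻¹ : (Rd q d l)ˣ) : Rd q d l)
  have ha : a * ia = 1 := Units.mul_inv _
  have hb : b * ib = 1 := Units.mul_inv _
  have hc : algebraMap (Polynomial (ZMod q)) (Rd q d l) (C (l j - l i)) = b - a := by
    have : C (l j - l i) = (X + C (l j)) - (X + C (l i)) := by
      rw [map_sub]; ring
    rw [this, map_sub, ← tU_val, ← tU_val]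
  rw [smul_eq, hc]
  linear_combination ia * hb - ib * ha

/-- E2 -/
lemma mul_inv_other_mem (hl : ∀ i j : Fin (d-1), i ≠ j → IsUnit (l i - l j))
    (i j : Fin (d-1)) (hij : i ≠ j) {x : Rd q d l} (hx : x ∈ Mi q d l j) :
    x * (((tU q d l i)⁻¹ : (Rd q d l)ˣ) : Rd q d l) ∈ Mi q d l i ⊔ Mi q d l j := by
  set ia : Rd q d l := (((tU q d l i)⁻¹ : (Rd q d l)ˣ) : Rd q d l) with hia
  set ib : Rd q d l := (((tU q d l j)⁻¹ : (Rd q d l)ˣ) : Rd q d l) with hib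
  obtain ⟨u, hu⟩ := hl j i (Ne.symm hij)
  have hc : (↑u⁻¹ : ZMod q) * (l j - l i) = 1 := by rw [← hu]; exact Units.inv_mul _
  have key : ia * ib = (↑u⁻¹ : ZMod q) • (ia - ib) := by
    rw [← pf_identity q d l i j, smul_smul, hc, one_smul]
  have gen : ∀ k : ℕ, 1 ≤ k → ib ^ k * ia ∈ Mi q d l i ⊔ Mi q d l j := by
    intro k hk
    induction k, hk using Nat.le_induction with
    | base =>
      rw [pow_one, mul_comm, key]
      exact Submodule.smul_mem _ _ (Submodule.sub_mem _
        (Submodule.mem_sup_left (by simpa using inv_mem_Mi q d l i 1 le_rfl))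
        (Submodule.mem_sup_right (by simpa using inv_mem_Mi q d l j 1 le_rfl)))
    | succ n hn ih =>
      have h1 : ib ^ (n + 1) * ia = ib ^ n * (ia * ib) := by ring
      have : ib ^ (n + 1) * ia = (↑u⁻¹ : ZMod q) • (ib ^ n * ia - ib ^ (n+1)) := by
        rw [h1, key, mul_smul_comm, mul_sub, ← pow_succ, mul_comm (ib ^ n) ia]
      rw [this]
      exact Submodule.smul_mem _ _ (Submodule.sub_mem _ ih
        (Submodule.mem_sup_right (inv_mem_Mi q d l j (n+1) (by omega))))
  induction hx using Submodule.span_induction with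
  | mem x h =>
    obtain ⟨k, hk, rfl⟩ := h
    exact gen k hk
  | zero => simpa using Submodule.zero_mem _
  | add x y hx hy ihx ihy => rw [add_mul]; exact Submodule.add_mem _ ihx ihy
  | smul c x hx ih => rw [smul_mul_assoc]; exact Submodule.smul_mem _ _ ih

/-- E3 -/
lemma poly_mul_inv_mem (i : Fin (d-1)) (p : Polynomial (ZMod q)) :
    algebraMap (Polynomial (ZMod q)) (Rd q d l) p
        * (((tU q d l i)⁻¹ : (Rd q d l)ˣ) : Rd q d l) ∈ Md q d l ⊔ Mi q d l i := by
  set φ := algebraMap (Polynomial (ZMod q)) (Rd q d l)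
  set ia : Rd q d l := (((tU q d l i)⁻¹ : (Rd q d l)ˣ) : Rd q d l)
  have hsplit : (X + C (l i)) * (p /ₘ (X + C (l i))) + C (p.eval (-(l i))) = p := by
    have h1 := modByMonic_add_div p (X + C (l i))
    have h2 : p %ₘ (X + C (l i)) = C (p.eval (-(l i))) := by
      have := modByMonic_X_sub_C_eq_C_eval p (-(l i))
      rwa [map_neg, sub_neg_eq_add] at this
    rw [h2] at h1; linear_combination h1
  have hinv : φ (X + C (l i)) * ia = 1 := by
    rw [← tU_val]; exact Units.mul_inv _
  have : φ p * ia = φ (p /ₘ (X + C (l i))) + (p.eval (-(l i))) • ia := by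
    conv_lhs => rw [← hsplit]
    rw [smul_eq, map_add, map_mul, add_mul,
      mul_comm (φ (X + C (l i))) (φ (p /ₘ (X + C (l i)))), mul_assoc, hinv, mul_one]
  rw [this]
  exact Submodule.add_mem _
    (Submodule.mem_sup_left ⟨_, rfl⟩)
    (Submodule.mem_sup_right (Submodule.smul_mem _ _ (by simpa using inv_mem_Mi q d l i 1 le_rfl)))

/-- the full decomposition submodule -/
noncomputable def NN : Submodule (ZMod q) (Rd q d l) := Md q d l ⊔ ⨆ i, Mi q d l i

lemma Mi_le_NN (i : Fin (d-1)) : Mi q d l i ≤ NN q d l :=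
  le_trans (le_iSup _ i) le_sup_right

lemma Md_le_NN : Md q d l ≤ NN q d l := le_sup_left

/-- E4 -/
lemma NN_mul_inv (hl : ∀ i j : Fin (d-1), i ≠ j → IsUnit (l i - l j))
    (i : Fin (d-1)) {x : Rd q d l} (hx : x ∈ NN q d l) :
    x * (((tU q d l i)⁻¹ : (Rd q d l)ˣ) : Rd q d l) ∈ NN q d l := by
  obtain ⟨y, hy, z, hz, rfl⟩ := Submodule.mem_sup.mp hx
  rw [add_mul]
  refine Submodule.add_mem _ ?_ ?_
  · obtain ⟨p, rfl⟩ := hy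
    exact le_trans (sup_le (Md_le_NN q d l) (Mi_le_NN q d l i)) le_rfl
      (poly_mul_inv_mem q d l i p)
  · refine Submodule.iSup_induction (motive := fun z => z * (((tU q d l i)⁻¹ : (Rd q d l)ˣ) : Rd q d l) ∈ NN q d l)
      (fun j => Mi q d l j) hz ?_ (by simpa using Submodule.zero_mem _) ?_
    · intro j w hw
      by_cases hji : j = i
      · subst hji
        exact Mi_le_NN q d l j (mul_inv_self_mem q d l j hw)
      · exact sup_le (Mi_le_NN q d l i) (Mi_le_NN q d l j)
          (mul_inv_other_mem q d l hl i j (Ne.symm hji) hw)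
    · intro w w' ihw ihw'
      rw [add_mul]; exact Submodule.add_mem _ ihw ihw' 

/-- E5 -/
lemma mem_NN (hl : ∀ i j : Fin (d-1), i ≠ j → IsUnit (l i - l j)) (x : Rd q d l) :
    x ∈ NN q d l := by
  set φ := algebraMap (Polynomial (ZMod q)) (Rd q d l) with hφ
  obtain ⟨⟨r, s⟩, hx⟩ := IsLocalization.mk'_surjective (dlSub q d l) x
  have key : ∀ (t : Polynomial (ZMod q)), t ∈ dlSub q d l →
      ∀ y : Rd q d l, y * φ t ∈ NN q d l → y ∈ NN q d l := by
    intro t ht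
    induction ht using Submonoid.closure_induction with
    | mem t h =>
      intro y hy
      obtain ⟨i, rfl⟩ := h
      have : y = (y * φ (X + C (l i))) * (((tU q d l i)⁻¹ : (Rd q d l)ˣ) : Rd q d l) := by
        rw [mul_assoc, ← tU_val, Units.mul_inv, mul_one]
      rw [this]
      exact NN_mul_inv q d l hl i hy
    | one => intro y hy; simpa using hy
    | mul t t' ht ht' iht iht' =>
      intro y hy
      refine iht _ (iht' _ ?_)
      have h2 : (y * φ t) * φ t' = y * φ (t * t') := by rw [map_mul]; ring
      rw [h2]; exact hy
  refine key s s.2 x ?_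
  have : x * φ s = φ r := by rw [← hx]; exact IsLocalization.mk'_spec _ r s
  rw [this]
  exact Md_le_NN q d l ⟨r, rfl⟩

/-- U0: injectivity of the algebra map -/
lemma phi_inj : Function.Injective (algebraMap (Polynomial (ZMod q)) (Rd q d l)) := by
  refine IsLocalization.injective (M := dlSub q d l) (Rd q d l) ?_
  refine Submonoid.closure_le.mpr ?_
  rintro p ⟨i, rfl⟩
  exact (monic_X_add_C (l i)).mem_nonZeroDivisors

/-- U1: clearing denominators for elements of Mi -/
lemma Mi_clear (hq : 2 ≤ q) (i : Fin (d-1)) {x : Rd q d l} (hx : x ∈ Mi q d l i) :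
    ∃ K : ℕ, 1 ≤ K ∧ ∃ g : Polynomial (ZMod q), g.natDegree < K ∧
      x * algebraMap (Polynomial (ZMod q)) (Rd q d l) ((X + C (l i)) ^ K)
        = algebraMap (Polynomial (ZMod q)) (Rd q d l) g := by
  haveI : Fact (1 < q) := ⟨hq⟩
  set φ := algebraMap (Polynomial (ZMod q)) (Rd q d l)
  set f : Polynomial (ZMod q) := X + C (l i) with hf
  have hfd : f.natDegree = 1 := natDegree_X_add_C (l i)
  induction hx using Submodule.span_induction with
  | mem x h =>
    obtain ⟨k, hk, rfl⟩ := h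
    refine ⟨k, hk, 1, by simp; omega, ?_⟩
    rw [map_pow, ← tU_val, map_one]
    rw [← mul_pow]
    simp [Units.inv_mul]
  | zero => exact ⟨1, le_rfl, 0, by simp, by simp⟩
  | add x y hx hy ihx ihy =>
    obtain ⟨K1, hK1, g1, hg1, he1⟩ := ihx
    obtain ⟨K2, hK2, g2, hg2, he2⟩ := ihy
    refine ⟨max K1 K2, le_trans hK1 (le_max_left _ _),
      g1 * f ^ (max K1 K2 - K1) + g2 * f ^ (max K1 K2 - K2), ?_, ?_⟩
    · refine lt_of_le_of_lt (natDegree_add_le _ _) ?_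
      have b1 : (g1 * f ^ (max K1 K2 - K1)).natDegree ≤ g1.natDegree + (max K1 K2 - K1) := by
        refine le_trans (natDegree_mul_le) ?_
        have h2 := natDegree_pow_le (p := f) (n := max K1 K2 - K1)
        rw [hfd, mul_one] at h2
        omega
      have b2 : (g2 * f ^ (max K1 K2 - K2)).natDegree ≤ g2.natDegree + (max K1 K2 - K2) := by
        refine le_trans (natDegree_mul_le) ?_
        have h2 := natDegree_pow_le (p := f) (n := max K1 K2 - K2)
        rw [hfd, mul_one] at h2
        omega
      omega
    · have e1 : f ^ (max K1 K2) = f ^ K1 * f ^ (max K1 K2 - K1) := by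
        rw [← pow_add]; congr 1; omega
      have e2 : f ^ (max K1 K2) = f ^ K2 * f ^ (max K1 K2 - K2) := by
        rw [← pow_add]; congr 1; omega
      rw [add_mul, map_add]
      nth_rewrite 1 [e1]
      rw [e2]
      rw [map_mul, map_mul, ← mul_assoc, he1, ← mul_assoc, he2, map_mul, map_mul]
  | smul c x hx ih =>
    obtain ⟨K, hK, g, hg, he⟩ := ih
    refine ⟨K, hK, C c * g, lt_of_le_of_lt (natDegree_C_mul_le _ _) hg, ?_⟩
    rw [smul_mul_assoc, he, map_mul, ← smul_eq]

/-- U2: units in the quotient ring -/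
lemma quot_unit (hl : ∀ i j : Fin (d-1), i ≠ j → IsUnit (l i - l j))
    (i j : Fin (d-1)) (hij : j ≠ i) (K : ℕ) (hK : 1 ≤ K) :
    IsUnit (Ideal.Quotient.mk (Ideal.span {(X + C (l i) : Polynomial (ZMod q)) ^ K})
      (X + C (l j))) := by
  set π := Ideal.Quotient.mk (Ideal.span {(X + C (l i) : Polynomial (ZMod q)) ^ K})
  have hsplit : (X + C (l j) : Polynomial (ZMod q)) = (X + C (l i)) + C (l j - l i) := by
    rw [map_sub]; ring
  rw [hsplit, map_add]
  refine IsNilpotent.isUnit_add_right_of_commute ⟨K, ?_⟩ ?_ (Commute.all _ _)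
  · rw [← map_pow, Ideal.Quotient.eq_zero_iff_mem]
    exact Ideal.subset_span rfl
  · exact (isUnit_C.mpr (hl j i hij)).map π

/-- U3: independence -/
lemma indep (hq : 2 ≤ q) (hl : ∀ i j : Fin (d-1), i ≠ j → IsUnit (l i - l j))
    (Q1 : Fin (d-1) → Rd q d l) (p : Polynomial (ZMod q))
    (h1 : ∀ i, Q1 i ∈ Mi q d l i)
    (h0 : (∑ i, Q1 i) + algebraMap (Polynomial (ZMod q)) (Rd q d l) p = 0) :
    ∀ i, Q1 i = 0 := by
  haveI : Fact (1 < q) := ⟨hq⟩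
  set φ := algebraMap (Polynomial (ZMod q)) (Rd q d l) with hφ
  set f : Fin (d-1) → Polynomial (ZMod q) := fun i => X + C (l i) with hfdef
  choose K hK g hg he using fun i => Mi_clear q d l hq i (h1 i)
  set KK : ℕ := (Finset.univ.sup K) + 1 with hKK
  have hKle : ∀ i, K i ≤ KK := fun i => by
    have := Finset.le_sup (f := K) (Finset.mem_univ i); omega
  set g' : Fin (d-1) → Polynomial (ZMod q) := fun i => g i * (f i) ^ (KK - K i) with hg'
  have hg'deg : ∀ i, (g' i).natDegree < KK := by
    intro i
    have b1 : (g' i).natDegree ≤ (g i).natDegree + (KK - K i) := by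
      refine le_trans natDegree_mul_le ?_
      have h2 := natDegree_pow_le (p := f i) (n := KK - K i)
      rw [show (f i).natDegree = 1 from natDegree_X_add_C (l i), mul_one] at h2
      omega
    have := hg i; have := hK i; have := hKle i
    omega
  have he' : ∀ i, Q1 i * φ ((f i) ^ KK) = φ (g' i) := by
    intro i
    have : (f i) ^ KK = (f i) ^ K i * (f i) ^ (KK - K i) := by
      rw [← pow_add]; congr 1; have := hKle i; omega
    rw [this, map_mul, ← mul_assoc, he i, ← map_mul]
  set F : Polynomial (ZMod q) := ∏ j, (f j) ^ KK with hF
  set G : Fin (d-1) → Polynomial (ZMod q) := fun i => ∏ j ∈ Finset.univ.erase i, (f j) ^ KK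
    with hG
  have hFG : ∀ i, F = (f i) ^ KK * G i := fun i =>
    (Finset.mul_prod_erase Finset.univ (fun j => (f j) ^ KK) (Finset.mem_univ i)).symm
  have key : (∑ i, g' i * G i) + p * F = 0 := by
    apply phi_inj q d l
    rw [map_zero, map_add, map_sum, map_mul]
    have : ∀ i, φ (g' i * G i) = Q1 i * φ F := by
      intro i
      rw [map_mul φ (g' i) (G i), hFG i, map_mul φ ((f i) ^ KK) (G i), ← mul_assoc, he' i]
    rw [Finset.sum_congr rfl (fun i _ => this i), ← Finset.sum_mul]
    calc (∑ i, Q1 i) * φ F + φ p * φ F = ((∑ i, Q1 i) + φ p) * φ F := by ring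
    _ = 0 := by rw [h0, zero_mul]
  intro i
  -- pass to the quotient mod (f i)^KK
  set I : Ideal (Polynomial (ZMod q)) := Ideal.span {(f i) ^ KK} with hI
  set π := Ideal.Quotient.mk I with hπ
  have hGz : ∀ j, j ≠ i → π (G j) = 0 := by
    intro j hj
    rw [hπ, Ideal.Quotient.eq_zero_iff_mem, hI, Ideal.mem_span_singleton]
    exact Finset.dvd_prod_of_mem (fun m => (f m) ^ KK)
      (Finset.mem_erase.mpr ⟨Ne.symm hj, Finset.mem_univ i⟩)
  have hFz : π F = 0 := by
    rw [hFG i, map_mul]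
    have : π ((f i) ^ KK) = 0 := by
      rw [hπ, Ideal.Quotient.eq_zero_iff_mem]; exact Ideal.subset_span rfl
    rw [this, zero_mul]
  have hmain : π (g' i) * π (G i) = 0 := by
    have hs := congrArg π key
    rw [map_add, map_sum, map_mul, hFz, mul_zero, add_zero, map_zero] at hs
    rw [← map_mul, ← Finset.sum_eq_single (s := Finset.univ) (f := fun j => π (g' j * G j)) i
      (fun j _ hj => by show π (g' j * G j) = 0; rw [map_mul, hGz j hj, mul_zero])
      (fun h => absurd (Finset.mem_univ i) h)]
    rw [← map_sum] at hs ⊢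
    exact hs
  have hGu : IsUnit (π (G i)) := by
    have : π (G i) = ∏ j ∈ Finset.univ.erase i, π ((f j) ^ KK) := by
      rw [hG]; exact map_prod π _ _
    rw [this]
    refine Finset.prod_induction _ IsUnit (fun a b => IsUnit.mul) isUnit_one ?_
    intro j hj
    rw [map_pow]
    exact ((quot_unit q d l hl i j (Finset.ne_of_mem_erase hj) KK (by omega))).pow _
  have hg'z : π (g' i) = 0 := by
    obtain ⟨v, hv⟩ := hGu
    calc π (g' i) = π (g' i) * π (G i) * ↑v⁻¹ := by
          rw [← hv, mul_assoc, Units.mul_inv, mul_one]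
    _ = 0 := by rw [hmain, zero_mul]
  have hdvd : (f i) ^ KK ∣ g' i := by
    rwa [hπ, hI, Ideal.Quotient.eq_zero_iff_dvd] at hg'z
  have hg'zero : g' i = 0 := by
    by_contra hne
    obtain ⟨h', hh⟩ := hdvd
    have hh' : h' ≠ 0 := by
      intro h
      rw [h, mul_zero] at hh
      exact hne hh
    have hdeg : ((f i) ^ KK * h').natDegree = ((f i) ^ KK).natDegree + h'.natDegree :=
      ((monic_X_add_C (l i)).pow KK).natDegree_mul' hh'
    have hfK : ((f i) ^ KK).natDegree = KK := by
      rw [(monic_X_add_C (l i)).natDegree_pow, natDegree_X_add_C, mul_one]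
    have h3 := hg'deg i
    rw [hh] at h3
    omega
  have hz : Q1 i * φ ((f i) ^ KK) = 0 := by rw [he' i, hg'zero, map_zero]
  have hu : φ ((f i) ^ KK) = ((tU q d l i ^ KK : (Rd q d l)ˣ) : Rd q d l) := by
    rw [map_pow, ← tU_val, Units.val_pow_eq_pow_val]
  rw [hu] at hz
  exact (Units.mul_left_eq_zero _).mp hz

end DecompAux
/-- The Decomposition Lemma (Lemma 2.1): every `Q ∈ R_d(ℤ_q)` can be written uniquely as
`Q = P_1 + ⋯ + P_{d-1} + P_d`, where for `1 ≤ i ≤ d-1` the summand `P_i` lies in the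
`ℤ_q`-submodule spanned by the negative powers `(t+l_i)^(-k)`, `k ≥ 1`, and `P_d` lies in
the image of the polynomial ring `ℤ_q[t]`.  Equivalently, the additive group of
`R_d(ℤ_q)` is the internal direct sum of these `d` subgroups. -/
theorem statement0 (q d : ℕ) (hq : 2 ≤ q) (hd : 2 ≤ d) (l : Fin (d-1) → ZMod q)
    (hl0 : l ⟨0, by omega⟩ = 0)
    (hl : ∀ i j : Fin (d-1), i ≠ j → IsUnit (l i - l j))
    (Q : Rd q d l) :
    ∃! P : (Fin (d-1) → Rd q d l) × Rd q d l,
      (∀ i : Fin (d-1), P.1 i ∈ Submodule.span (ZMod q)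
        {x : Rd q d l | ∃ k : ℕ, 1 ≤ k ∧ x = (((tU q d l i)⁻¹ : (Rd q d l)ˣ) : Rd q d l) ^ k}) ∧
      P.2 ∈ (algebraMap (Polynomial (ZMod q)) (Rd q d l)).range ∧
      Q = (∑ i, P.1 i) + P.2 := by
  classical
  have hN := DecompAux.mem_NN q d l hl Q
  rw [DecompAux.NN] at hN
  obtain ⟨y, hy, z, hz, hQ⟩ := Submodule.mem_sup.mp hN
  obtain ⟨c, hc, hcs⟩ := (Submodule.mem_iSup_iff_exists_finsupp _ z).mp hz
  obtain ⟨py, hpy0⟩ := hy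
  have hpy : algebraMap (Polynomial (ZMod q)) (Rd q d l) py = y := hpy0
  have hQe : Q = (∑ i, c i) + y := by
    rw [← hQ, ← hcs, Finsupp.sum_fintype _ _ (fun _ => rfl)]
    ring
  refine ⟨⟨fun i => c i, y⟩, ⟨fun i => hc i, ⟨py, hpy⟩, hQe⟩, ?_⟩
  rintro ⟨P1, P2⟩ ⟨hP1, hP2, hPQ⟩
  obtain ⟨p2, hp2⟩ := hP2
  have hDmem : ∀ i, P1 i - c i ∈ DecompAux.Mi q d l i :=
    fun i => Submodule.sub_mem _ (hP1 i) (hc i)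
  have h0 : (∑ i, (P1 i - c i)) + (P2 - y) = 0 := by
    have harr : (∑ i, (P1 i - c i)) + (P2 - y) = ((∑ i, P1 i) + P2) - ((∑ i, c i) + y) := by
      rw [Finset.sum_sub_distrib]; ring
    rw [harr, ← hPQ, ← hQe, sub_self]
  have h0' : (∑ i, (P1 i - c i))
      + algebraMap (Polynomial (ZMod q)) (Rd q d l) (p2 - py) = 0 := by
    rwa [map_sub, hp2, hpy]
  have hD0 := DecompAux.indep q d l hq hl (fun i => P1 i - c i) (p2 - py) hDmem h0'
  have hP2y : P2 - y = 0 := by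
    have : (∑ i, (P1 i - c i)) = 0 := by
      rw [Finset.sum_congr rfl (fun i _ => hD0 i), Finset.sum_const_zero]
    rwa [this, zero_add] at h0
  simp only [Prod.mk.injEq]
  exact ⟨funext fun i => sub_eq_zero.mp (hD0 i), sub_eq_zero.mp hP2y⟩
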